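/- Let V₁ and V₂ be arbitrary subspaces of ℂ^n and set W = V₂ ∩ V₁^⊥. Then for all z ∈ ℂ, T_{V₂}(z) ∘ T_{V₁}(z) = T_{V₂ ∩ W^⊥}(z) ∘ T_{W ⊕ V₁}(z). Moreover the pair of subspaces on the right satisfies the non-intersection condition: (V₂ ∩ W^⊥) ∩ (W ⊕ V₁)^⊥ = {0}. -/

import Mathlib

noncomputable def projc {n : ℕ} (V : Submodule ℂ (EuclideanSpace ℂ (Fin n))) :
    EuclideanSpace ℂ (Fin n) →L[ℂ] EuclideanSpace ℂ (Fin n) :=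
  V.subtypeL.comp (V.orthogonalProjectionOnto)

/-- `T_V(z) = z·Π_V + Π_V^⊥`. -/
noncomputable def Tc {n : ℕ} (V : Submodule ℂ (EuclideanSpace ℂ (Fin n))) (z : ℂ) :
    EuclideanSpace ℂ (Fin n) →L[ℂ] EuclideanSpace ℂ (Fin n) :=
  z • projc V + (1 - projc V)

lemma projc_apply {n : ℕ} (V : Submodule ℂ (EuclideanSpace ℂ (Fin n))) (x) :
    projc V x = (V.orthogonalProjectionOnto x : EuclideanSpace ℂ (Fin n)) := rfl

lemma projc_sup {n : ℕ} {U V : Submodule ℂ (EuclideanSpace ℂ (Fin n))}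
    (h : U ≤ Vᗮ) : projc (U ⊔ V) = projc U + projc V := by
  have hVU : V ≤ Uᗮ := (Submodule.isOrtho_iff_le.mpr h).symm.le
  refine ContinuousLinearMap.ext fun x => ?_
  simp only [ContinuousLinearMap.add_apply, projc_apply]
  show (U ⊔ V).starProjection x = _
  apply Submodule.eq_starProjection_of_mem_orthogonal
  · exact Submodule.add_mem_sup (U.orthogonalProjectionOnto x).2 (V.orthogonalProjectionOnto x).2
  · rw [← Submodule.inf_orthogonal, Submodule.mem_inf]
    constructor
    · rw [sub_add_eq_sub_sub]
      exact Uᗮ.sub_mem (Submodule.sub_starProjection_mem_orthogonal x)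
        (hVU (V.orthogonalProjectionOnto x).2)
    · rw [sub_add_eq_sub_sub, sub_right_comm]
      exact Vᗮ.sub_mem (Submodule.sub_starProjection_mem_orthogonal x)
        (h (U.orthogonalProjectionOnto x).2)

lemma projc_mul_zero {n : ℕ} {U V : Submodule ℂ (EuclideanSpace ℂ (Fin n))}
    (h : U ≤ Vᗮ) : projc V * projc U = 0 := by
  refine ContinuousLinearMap.ext fun x => ?_
  show (projc V) ((projc U) x) = 0
  rw [projc_apply, projc_apply,
    Submodule.orthogonalProjectionOnto_apply_of_mem_orthogonal (h (Submodule.coe_mem _))]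
  rfl

lemma Tc_eq {n : ℕ} (V : Submodule ℂ (EuclideanSpace ℂ (Fin n))) (z : ℂ) :
    Tc V z = 1 + (z - 1) • projc V := by
  rw [Tc]; module

lemma Tc_expand {A : Type*} [Ring A] [Algebra ℂ A] (a : ℂ) (p q : A) :
    (1 + a • p) * (1 + a • q) = 1 + a • (p + q) + (a * a) • (p * q) := by
  rw [mul_add, add_mul, add_mul]
  simp only [one_mul, mul_one, smul_mul_smul_comm, smul_add]
  module

theorem T_comp_general {n : ℕ} (V₁ V₂ : Submodule ℂ (EuclideanSpace ℂ (Fin n))) (z : ℂ) :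
    (Tc V₂ z).comp (Tc V₁ z)
      = (Tc (V₂ ⊓ (V₂ ⊓ V₁ᗮ)ᗮ) z).comp (Tc ((V₂ ⊓ V₁ᗮ) ⊔ V₁) z) ∧
    (V₂ ⊓ (V₂ ⊓ V₁ᗮ)ᗮ) ⊓ ((V₂ ⊓ V₁ᗮ) ⊔ V₁)ᗮ = ⊥ := by
  set W := V₂ ⊓ V₁ᗮ with hW
  have hWV₁ : W ≤ V₁ᗮ := inf_le_right
  have hQW : V₂ ⊓ Wᗮ ≤ Wᗮ := inf_le_right
  have hWQ : W ≤ (V₂ ⊓ Wᗮ)ᗮ := (Submodule.isOrtho_iff_le.mpr hQW).symm.le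
  have hV₁W : V₁ ≤ Wᗮ := (Submodule.isOrtho_iff_le.mpr hWV₁).symm.le
  have hdecomp : W ⊔ (V₂ ⊓ Wᗮ) = V₂ := by
    rw [inf_comm V₂ Wᗮ]
    exact Submodule.sup_orthogonal_inf_of_hasOrthogonalProjection inf_le_left
  have hP₂ : projc V₂ = projc W + projc (V₂ ⊓ Wᗮ) := by
    conv_lhs => rw [← hdecomp]
    exact projc_sup hWQ
  have hR : projc (W ⊔ V₁) = projc W + projc V₁ := projc_sup hWV₁
  have hsum : projc V₂ + projc V₁ = projc (V₂ ⊓ Wᗮ) + projc (W ⊔ V₁) := by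
    rw [hP₂, hR]; abel
  have hprod : projc V₂ * projc V₁ = projc (V₂ ⊓ Wᗮ) * projc (W ⊔ V₁) := by
    rw [hP₂, hR, add_mul, mul_add, projc_mul_zero hV₁W, projc_mul_zero hWQ]
  constructor
  · show Tc V₂ z * Tc V₁ z = Tc (V₂ ⊓ Wᗮ) z * Tc (W ⊔ V₁) z
    rw [Tc_eq, Tc_eq, Tc_eq, Tc_eq, Tc_expand, Tc_expand, hsum, hprod]
  · rw [eq_bot_iff]
    intro x hx
    obtain ⟨⟨hx₂, hxWp⟩, hxs⟩ := hx
    have hxW : x ∈ W := ⟨hx₂, (Submodule.orthogonal_le le_sup_right) hxs⟩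
    exact (W.orthogonal_disjoint).le_bot ⟨hxW, hxWp⟩
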